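/- Let n ≥ 1 and let A be a set partition of {1,…,n}. Then the intertwining number of A equals the number of equalities along south-west to north-east antidiagonals in the upper triangle of the rank-control matrix of M(A): i(A) = E(A), where E(A) = #{(i,j) : 2 ≤ i ≤ j+1 ≤ n and r_{i,j} = r_{i−1,j+1}}. -/

import Mathlib

open Finset
open scoped Classical

noncomputable section

/-- The arcs of a set partition `A` of `{1,…,n}`: pairs `(i,j)` with `i < j`, `i` and `j` in
the same block, and no element of that block strictly between `i` and `j`. -/
noncomputable def arcs (n : ℕ) (A : Finpartition (Finset.Icc 1 n)) : Finset (ℕ × ℕ) :=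
  (Finset.Icc 1 n ×ˢ Finset.Icc 1 n).filter
    (fun p => p.1 < p.2 ∧ ∃ B ∈ A.parts, p.1 ∈ B ∧ p.2 ∈ B ∧
      ∀ k ∈ B, ¬ (p.1 < k ∧ k < p.2))

/-- The depth of a vertex `v`: the number of arcs `(i,j)` with `i < v < j`. -/
noncomputable def vertexDepth (n : ℕ) (A : Finpartition (Finset.Icc 1 n)) (v : ℕ) : ℕ :=
  ((arcs n A).filter (fun p => p.1 < v ∧ v < p.2)).card

/-- The depth of an arc `α = (u,v)`: the number of arcs `(i,j)` with `i < u < v < j`. -/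
noncomputable def arcDepth (n : ℕ) (A : Finpartition (Finset.Icc 1 n)) (α : ℕ × ℕ) : ℕ :=
  ((arcs n A).filter (fun p => p.1 < α.1 ∧ α.2 < p.2)).card

/-- The depth index `t(A) = Σ_{i=1}^m (n−i) − Σ_{v=1}^n depth(v) + Σ_{α} depth(α)`,
where `m` is the number of arcs of `A`. -/
noncomputable def depthIndex (n : ℕ) (A : Finpartition (Finset.Icc 1 n)) : ℤ :=
  (∑ i ∈ Finset.Icc 1 (arcs n A).card, ((n : ℤ) - (i : ℤ)))
    - ∑ v ∈ Finset.Icc 1 n, (vertexDepth n A v : ℤ)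
    + ∑ α ∈ arcs n A, (arcDepth n A α : ℤ)

/-- The intertwining number of `A`: the sum over all unordered pairs of distinct blocks
`{B, C}` of the number of pairs `(b,c) ∈ B × C` with no element of `B ∪ C` strictly between
them.  Since distinct blocks are disjoint, this equals the number of pairs `(x,y)` with
`x < y` lying in different blocks `B ∋ x`, `C ∋ y` such that no element of `B ∪ C` lies
strictly between `x` and `y`. -/
noncomputable def inumber (n : ℕ) (A : Finpartition (Finset.Icc 1 n)) : ℕ :=
  ((Finset.Icc 1 n ×ˢ Finset.Icc 1 n).filter
    (fun p => p.1 < p.2 ∧ ∃ B ∈ A.parts, ∃ C ∈ A.parts, B ≠ C ∧ p.1 ∈ B ∧ p.2 ∈ C ∧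
      ∀ k ∈ B ∪ C, ¬ (p.1 < k ∧ k < p.2))).card

/-- `u` and `v` lie in the same block of `A`. -/
def sameBlock (n : ℕ) (A : Finpartition (Finset.Icc 1 n)) (u v : ℕ) : Prop :=
  ∃ B ∈ A.parts, u ∈ B ∧ v ∈ B

/-- The partner of `v`: `0` if `v` is the minimum of its block, and otherwise the largest
element of the block of `v` smaller than `v`. -/
noncomputable def partner (n : ℕ) (A : Finpartition (Finset.Icc 1 n)) (v : ℕ) : ℕ :=
  ((Finset.Icc 1 n).filter (fun u => u < v ∧ sameBlock n A u v)).sup id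

/-- The partial depth index `t_v(A) = u + #{arcs (i,j) : u < i < j < v}`, where `u` is the
partner of `v`. -/
noncomputable def partialDepthIndex (n : ℕ) (A : Finpartition (Finset.Icc 1 n)) (v : ℕ) : ℕ :=
  partner n A v +
    ((arcs n A).filter (fun p => partner n A v < p.1 ∧ p.2 < v)).card

/-- The partial intertwining number `i_v(A)`: the number of `i` with `u < i < v` (where `u`
is the partner of `v`) such that `i` has no successor in its block, or the successor of `i`
in its block is greater than `v`; i.e. every element of the block of `i` larger than `i`
is larger than `v`. -/
noncomputable def partialInumber (n : ℕ) (A : Finpartition (Finset.Icc 1 n)) (v : ℕ) : ℕ :=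
  ((Finset.Icc 1 n).filter
    (fun i => partner n A v < i ∧ i < v ∧
      ∀ j, sameBlock n A i j → i < j → v < j)).card

/-- The adjacency matrix of `A`: the `n × n` rational matrix whose `(i,j)` entry is `1` if
`(i+1, j+1)` is an arc of `A` (indices shifted from `Fin n` to `{1,…,n}`) and `0` otherwise. -/
noncomputable def adjMatrix (n : ℕ) (A : Finpartition (Finset.Icc 1 n)) :
    Matrix (Fin n) (Fin n) ℚ :=
  fun i j => if ((i : ℕ) + 1, (j : ℕ) + 1) ∈ arcs n A then 1 else 0

/-- The rank-control matrix entry `r_{i,j}` of an `n × n` matrix `M`: the rank of the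
submatrix of `M` consisting of rows `{i, i+1, …, n}` and columns `{1, …, j}`
(in 1-based indexing). -/
noncomputable def rankControl (n : ℕ) (M : Matrix (Fin n) (Fin n) ℚ) (i j : ℕ) : ℕ :=
  (M.submatrix (fun k : {k : Fin n // i ≤ (k : ℕ) + 1} => (k : Fin n))
               (fun l : {l : Fin n // (l : ℕ) + 1 ≤ j} => (l : Fin n))).rank

end

section Aux

variable {n : ℕ} {A : Finpartition (Finset.Icc 1 n)}

lemma rank_partialPerm {m' n' : Type*} [Fintype m'] [Fintype n'] [DecidableEq m'] [DecidableEq n']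
    (M : Matrix m' n' ℚ) (f : n' → Option m')
    (hM : ∀ j i, M i j = if f j = some i then 1 else 0)
    (hf : ∀ {j j' i}, f j = some i → f j' = some i → j = j') :
    M.rank = (Finset.univ.filter (fun j => (f j).isSome)).card := by
  have hdiag : M * M.transpose =
      Matrix.diagonal (fun i => if ∃ j, f j = some i then (1 : ℚ) else 0) := by
    ext i i'
    simp only [Matrix.mul_apply, Matrix.transpose_apply, Matrix.diagonal_apply]
    rcases eq_or_ne i i' with rfl | hne
    · simp only [if_pos rfl]
      by_cases h : ∃ j, f j = some i
      · obtain ⟨j0, hj0⟩ := h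
        rw [Finset.sum_eq_single j0]
        · rw [hM, if_pos hj0, if_pos (⟨j0, hj0⟩ : ∃ j, f j = some i)]; norm_num
        · intro b _ hb
          have : f b ≠ some i := fun hb' => hb (hf hb' hj0)
          simp [hM, this]
        · simp
      · rw [if_neg h]
        push_neg at h
        apply Finset.sum_eq_zero
        intro j _
        simp [hM, h j]
    · rw [if_neg hne]
      apply Finset.sum_eq_zero
      intro j _
      rcases hj : f j with _ | k
      · simp [hM, hj]
      · by_cases hk : k = i
        · have h2 : f j ≠ some i' := by
            rw [hj, hk]
            intro h
            exact hne (Option.some_injective _ h)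
          simp [hM, h2]
        · have : f j ≠ some i := by rw [hj]; simpa using hk
          simp [hM, this]
  have h1 : M.rank = (M * M.transpose).rank := (Matrix.rank_self_mul_transpose M).symm
  rw [h1, hdiag, Matrix.rank_diagonal, Fintype.card_subtype]
  symm
  apply Finset.card_bij (fun j hj => (f j).get (by simpa using (Finset.mem_filter.mp hj).2))
  · intro j hj
    simp only [Finset.mem_filter, Finset.mem_univ, true_and]
    have hs : (f j).isSome := by simpa using (Finset.mem_filter.mp hj).2
    have : f j = some ((f j).get hs) := (Option.some_get hs).symm
    rw [if_pos ⟨j, this⟩]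
    norm_num
  · intro j hj j' hj' h
    have hs : (f j).isSome := by simpa using (Finset.mem_filter.mp hj).2
    have hs' : (f j').isSome := by simpa using (Finset.mem_filter.mp hj').2
    exact hf (Option.some_get hs).symm (h ▸ (Option.some_get hs').symm)
  · intro i hi
    simp only [Finset.mem_filter, Finset.mem_univ, true_and] at hi
    have hex : ∃ j, f j = some i := by
      by_contra h
      rw [if_neg h] at hi
      exact hi rfl
    obtain ⟨j, hj⟩ := hex
    refine ⟨j, Finset.mem_filter.mpr ⟨Finset.mem_univ _, by simp [hj]⟩, ?_⟩
    simp [hj]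

lemma arcs_spec {p : ℕ × ℕ} (hp : p ∈ arcs n A) :
    p.1 ∈ Finset.Icc 1 n ∧ p.2 ∈ Finset.Icc 1 n ∧ p.1 < p.2 ∧
    ∃ B ∈ A.parts, p.1 ∈ B ∧ p.2 ∈ B ∧ ∀ k ∈ B, ¬ (p.1 < k ∧ k < p.2) := by
  simp only [arcs, Finset.mem_filter, Finset.mem_product] at hp
  tauto

lemma arcs_spec' {p : ℕ × ℕ} (hp : p ∈ arcs n A) :
    1 ≤ p.1 ∧ p.1 ≤ n ∧ 1 ≤ p.2 ∧ p.2 ≤ n ∧ p.1 < p.2 := by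
  obtain ⟨h1, h2, h3, -⟩ := arcs_spec hp
  rw [Finset.mem_Icc] at h1 h2
  exact ⟨h1.1, h1.2, h2.1, h2.2, h3⟩

lemma arc_col_unique {a a' b : ℕ} (h : (a, b) ∈ arcs n A) (h' : (a', b) ∈ arcs n A) :
    a = a' := by
  obtain ⟨-, -, hab, B, hB, haB, hbB, hno⟩ := arcs_spec h
  obtain ⟨-, -, hab', B', hB', haB', hbB', hno'⟩ := arcs_spec h'
  have hBB : B = B' := A.eq_of_mem_parts hB hB' hbB hbB'
  subst hBB
  by_contra hne
  rcases Nat.lt_or_ge a a' with hlt | hge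
  · exact hno a' haB' ⟨hlt, hab'⟩
  · exact hno' a haB ⟨lt_of_le_of_ne hge (Ne.symm hne), hab⟩

lemma arc_row_unique {a b b' : ℕ} (h : (a, b) ∈ arcs n A) (h' : (a, b') ∈ arcs n A) :
    b = b' := by
  obtain ⟨-, -, hab, B, hB, haB, hbB, hno⟩ := arcs_spec h
  obtain ⟨-, -, hab', B', hB', haB', hbB', hno'⟩ := arcs_spec h'
  have hBB : B = B' := A.eq_of_mem_parts hB hB' haB haB'
  subst hBB
  by_contra hne
  rcases Nat.lt_or_ge b b' with hlt | hge
  · exact hno' b hbB ⟨hab, hlt⟩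
  · exact hno b' hbB' ⟨hab', lt_of_le_of_ne hge (Ne.symm hne)⟩

lemma exists_arc_right {B : Finset ℕ} (hB : B ∈ A.parts) {u v : ℕ} (hu : u ∈ B) (hv : v ∈ B)
    (huv : u < v) : ∃ b, (u, b) ∈ arcs n A ∧ b ≤ v := by
  classical
  set T := B.filter (fun k => u < k) with hT
  have hvT : v ∈ T := Finset.mem_filter.mpr ⟨hv, huv⟩
  have hTne : T.Nonempty := ⟨v, hvT⟩
  set b := T.min' hTne with hb
  have hbT : b ∈ T := T.min'_mem hTne
  have hbB : b ∈ B := (Finset.mem_filter.mp hbT).1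
  have hub : u < b := (Finset.mem_filter.mp hbT).2
  refine ⟨b, ?_, T.min'_le v hvT⟩
  have hsub : B ⊆ Finset.Icc 1 n := A.le hB
  refine Finset.mem_filter.mpr ⟨Finset.mem_product.mpr ⟨hsub hu, hsub hbB⟩, hub, B, hB, hu, hbB, ?_⟩
  intro k hk ⟨h1, h2⟩
  exact absurd (T.min'_le k (Finset.mem_filter.mpr ⟨hk, h1⟩)) (not_le.mpr h2)

lemma exists_arc_left {B : Finset ℕ} (hB : B ∈ A.parts) {u v : ℕ} (hu : u ∈ B) (hv : v ∈ B)
    (huv : u < v) : ∃ a, (a, v) ∈ arcs n A ∧ u ≤ a := by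
  classical
  set T := B.filter (fun k => k < v) with hT
  have huT : u ∈ T := Finset.mem_filter.mpr ⟨hu, huv⟩
  have hTne : T.Nonempty := ⟨u, huT⟩
  set a := T.max' hTne with ha
  have haT : a ∈ T := T.max'_mem hTne
  have haB : a ∈ B := (Finset.mem_filter.mp haT).1
  have hav : a < v := (Finset.mem_filter.mp haT).2
  refine ⟨a, ?_, T.le_max' u huT⟩
  have hsub : B ⊆ Finset.Icc 1 n := A.le hB
  refine Finset.mem_filter.mpr ⟨Finset.mem_product.mpr ⟨hsub haB, hsub hv⟩, hav, B, hB, haB, hv, ?_⟩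
  intro k hk ⟨h1, h2⟩
  exact absurd (T.le_max' k (Finset.mem_filter.mpr ⟨hk, h2⟩)) (not_le.mpr h1)

lemma rankControl_eq (n : ℕ) (A : Finpartition (Finset.Icc 1 n)) (i j : ℕ) :
    rankControl n (adjMatrix n A) i j
      = ((arcs n A).filter (fun p => i ≤ p.1 ∧ p.2 ≤ j)).card := by
  classical
  set f : {l : Fin n // (l : ℕ) + 1 ≤ j} → Option {k : Fin n // i ≤ (k : ℕ) + 1} :=
    fun l => if h : ∃ k : {k : Fin n // i ≤ (k : ℕ) + 1},
        (((k : Fin n) : ℕ) + 1, ((l : Fin n) : ℕ) + 1) ∈ arcs n A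
      then some h.choose else none with hfdef
  have key : ∀ (l : {l : Fin n // (l : ℕ) + 1 ≤ j}) (k : {k : Fin n // i ≤ (k : ℕ) + 1}),
      f l = some k ↔ (((k : Fin n) : ℕ) + 1, ((l : Fin n) : ℕ) + 1) ∈ arcs n A := by
    intro l k
    constructor
    · intro h
      rw [hfdef] at h
      simp only at h
      split at h
      · rename_i hex
        have := hex.choose_spec
        rwa [Option.some_inj.mp h] at this
      · exact absurd h (by simp)
    · intro h
      have hex : ∃ k : {k : Fin n // i ≤ (k : ℕ) + 1},
          (((k : Fin n) : ℕ) + 1, ((l : Fin n) : ℕ) + 1) ∈ arcs n A := ⟨k, h⟩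
      rw [hfdef]
      simp only [dif_pos hex, Option.some_inj]
      have := hex.choose_spec
      have hcol : ((hex.choose : Fin n) : ℕ) + 1 = ((k : Fin n) : ℕ) + 1 :=
        arc_col_unique this h
      ext
      omega
  rw [rankControl, rank_partialPerm _ f]
  · apply Finset.card_bij (fun l hl =>
      ((((f l).get (by simpa using (Finset.mem_filter.mp hl).2) : Fin n) : ℕ) + 1,
        ((l : Fin n) : ℕ) + 1))
    · intro l hl
      have hs : (f l).isSome := by simpa using (Finset.mem_filter.mp hl).2
      have : f l = some ((f l).get hs) := (Option.some_get hs).symm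
      have harc := (key l _).mp this
      refine Finset.mem_filter.mpr ⟨harc, ((f l).get hs).2, l.2⟩
    · intro l hl l' hl' h
      have h2 := congrArg Prod.snd h
      simp only at h2
      have : (l : Fin n) = (l' : Fin n) := Fin.ext (by omega)
      exact Subtype.ext this
    · intro p hp
      obtain ⟨harc, hi, hj⟩ := Finset.mem_filter.mp hp
      obtain ⟨h1, h2, h3, h4, h5⟩ := arcs_spec' harc
      set kk : Fin n := ⟨p.1 - 1, by omega⟩ with hkk
      set ll : Fin n := ⟨p.2 - 1, by omega⟩ with hll
      have hk1 : (kk : ℕ) + 1 = p.1 := by simp [hkk]; omega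
      have hl1 : (ll : ℕ) + 1 = p.2 := by simp [hll]; omega
      have hkP : i ≤ (kk : ℕ) + 1 := by omega
      have hlP : (ll : ℕ) + 1 ≤ j := by omega
      have harc' : ((kk : ℕ) + 1, (ll : ℕ) + 1) ∈ arcs n A := by
        rw [hk1, hl1]; exact harc
      have hfl : f ⟨ll, hlP⟩ = some ⟨kk, hkP⟩ := (key ⟨ll, hlP⟩ ⟨kk, hkP⟩).mpr harc'
      refine ⟨⟨ll, hlP⟩, Finset.mem_filter.mpr ⟨Finset.mem_univ _, by simp [hfl]⟩, ?_⟩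
      have hget : (f ⟨ll, hlP⟩).get (by simp [hfl]) = ⟨kk, hkP⟩ := by simp [hfl]
      simp only [hget, hk1, hl1]
  · intro l k
    simp only [Matrix.submatrix_apply, adjMatrix]
    by_cases h : (((k : Fin n) : ℕ) + 1, ((l : Fin n) : ℕ) + 1) ∈ arcs n A
    · rw [if_pos h, if_pos ((key l k).mpr h)]
    · rw [if_neg h, if_neg (fun hc => h ((key l k).mp hc))]
  · intro l l' k hl hl'
    have h1 := (key l k).mp hl
    have h2 := (key l' k).mp hl'
    have := arc_row_unique h1 h2
    exact Subtype.ext (Fin.ext (by omega))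

lemma rank_cond_iff (n : ℕ) (A : Finpartition (Finset.Icc 1 n)) {x y : ℕ}
    (hy : 1 ≤ y) :
    rankControl n (adjMatrix n A) (x + 1) (y - 1) = rankControl n (adjMatrix n A) x y
      ↔ ∀ q ∈ arcs n A, x ≤ q.1 → q.2 ≤ y → x + 1 ≤ q.1 ∧ q.2 ≤ y - 1 := by
  rw [rankControl_eq, rankControl_eq]
  set s := (arcs n A).filter (fun p => x + 1 ≤ p.1 ∧ p.2 ≤ y - 1) with hs
  set t := (arcs n A).filter (fun p => x ≤ p.1 ∧ p.2 ≤ y) with ht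
  have hst : s ⊆ t := by
    intro q hq
    obtain ⟨hq1, hq2, hq3⟩ := Finset.mem_filter.mp hq
    exact Finset.mem_filter.mpr ⟨hq1, by omega, by omega⟩
  constructor
  · intro hcard q hq h1 h2
    have : s = t := Finset.eq_of_subset_of_card_le hst (le_of_eq hcard.symm)
    have hqt : q ∈ t := Finset.mem_filter.mpr ⟨hq, h1, h2⟩
    rw [← this] at hqt
    exact (Finset.mem_filter.mp hqt).2
  · intro hcond
    have hts : t ⊆ s := by
      intro q hq
      obtain ⟨hq1, hq2, hq3⟩ := Finset.mem_filter.mp hq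
      exact Finset.mem_filter.mpr ⟨hq1, hcond q hq1 hq2 hq3⟩
    rw [Finset.Subset.antisymm hst hts]

end Aux

/-- For `n ≥ 1` and a set partition `A` of `{1,…,n}`, the intertwining
number of `A` equals the number of equalities along south-west to north-east antidiagonals
in the upper triangle of the rank-control matrix of `M(A)`:
`i(A) = E(A) = #{(i,j) : 2 ≤ i ≤ j+1 ≤ n and r_{i,j} = r_{i−1,j+1}}`. -/
theorem inumber_eq_E (n : ℕ) (hn : 1 ≤ n) (A : Finpartition (Finset.Icc 1 n)) :
    inumber n A =
      ((Finset.Icc 2 n ×ˢ Finset.Icc 1 n).filter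
        (fun p => p.1 ≤ p.2 + 1 ∧ p.2 + 1 ≤ n ∧
          rankControl n (adjMatrix n A) p.1 p.2 =
            rankControl n (adjMatrix n A) (p.1 - 1) (p.2 + 1))).card := by
  classical
  rw [inumber]
  apply Finset.card_bij (fun p _ => (p.1 + 1, p.2 - 1))
  · -- maps into the target set
    intro p hp
    simp only [Finset.mem_filter, Finset.mem_product, Finset.mem_Icc] at hp
    obtain ⟨⟨⟨hx1, hxn⟩, hy1, hyn⟩, hxy, B, hB, C, hC, hBC, hxB, hyC, hno⟩ := hp
    simp only [Finset.mem_filter, Finset.mem_product, Finset.mem_Icc]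
    have h11 : p.1 + 1 - 1 = p.1 := by omega
    have h22 : p.2 - 1 + 1 = p.2 := by omega
    refine ⟨⟨⟨by omega, by omega⟩, by omega, by omega⟩, by omega, by omega, ?_⟩
    rw [h11, h22]
    rw [rank_cond_iff n A (by omega)]
    intro q hq hq1 hq2
    obtain ⟨-, -, hqlt, B', hB', hq1B', hq2B', hno'⟩ := arcs_spec hq
    have hne1 : q.1 ≠ p.1 := by
      intro h
      have hBB : B' = B := A.eq_of_mem_parts hB' hB (h ▸ hq1B') hxB
      have hq2B : q.2 ∈ B := hBB ▸ hq2B'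
      have hne2 : q.2 ≠ p.2 := by
        intro h2
        exact hBC (A.eq_of_mem_parts hB hC (h2 ▸ hq2B) hyC)
      exact hno q.2 (Finset.mem_union_left _ hq2B) ⟨by omega, by omega⟩
    have hne2 : q.2 ≠ p.2 := by
      intro h
      have hCC : B' = C := A.eq_of_mem_parts hB' hC (h ▸ hq2B') hyC
      have hq1C : q.1 ∈ C := hCC ▸ hq1B'
      have hne1' : q.1 ≠ p.1 := by
        intro h1
        exact hBC (A.eq_of_mem_parts hB hC hxB (h1 ▸ hq1C))
      exact hno q.1 (Finset.mem_union_right _ hq1C) ⟨by omega, by omega⟩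
    omega
  · -- injective
    intro a ha b hb h
    simp only [Finset.mem_filter, Finset.mem_product, Finset.mem_Icc] at ha hb
    obtain ⟨⟨⟨ha1, -⟩, -, -⟩, haxy, -⟩ := ha
    obtain ⟨⟨⟨hb1, -⟩, -, -⟩, hbxy, -⟩ := hb
    have h1 := congrArg Prod.fst h
    have h2 := congrArg Prod.snd h
    simp only at h1 h2
    exact Prod.ext (by omega) (by omega)
  · -- surjective
    intro p hp
    simp only [Finset.mem_filter, Finset.mem_product, Finset.mem_Icc] at hp
    obtain ⟨⟨⟨hi2, hin⟩, hj1, hjn⟩, hij, hjn', hrank⟩ := hp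
    set x := p.1 - 1 with hxdef
    set y := p.2 + 1 with hydef
    have hx1 : x + 1 = p.1 := by omega
    have hy1 : y - 1 = p.2 := by omega
    have hrank' : rankControl n (adjMatrix n A) (x + 1) (y - 1)
        = rankControl n (adjMatrix n A) x y := by
      rw [hx1, hy1]; exact hrank
    have hcond := (rank_cond_iff n A (by omega)).mp hrank'
    have hxmem : x ∈ Finset.Icc 1 n := Finset.mem_Icc.mpr ⟨by omega, by omega⟩
    have hymem : y ∈ Finset.Icc 1 n := Finset.mem_Icc.mpr ⟨by omega, by omega⟩
    obtain ⟨B, hB, hxB⟩ := A.exists_mem hxmem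
    obtain ⟨C, hC, hyC⟩ := A.exists_mem hymem
    have hxy : x < y := by omega
    have hBC : B ≠ C := by
      intro h
      subst h
      obtain ⟨b, harc, hb⟩ := exists_arc_right hB hxB hyC hxy
      have := hcond (x, b) harc (le_refl x) hb
      omega
    have hno : ∀ k ∈ B ∪ C, ¬ (x < k ∧ k < y) := by
      rintro k hk ⟨h1, h2⟩
      rcases Finset.mem_union.mp hk with hkB | hkC
      · obtain ⟨b, harc, hb⟩ := exists_arc_right hB hxB hkB h1
        have := hcond (x, b) harc (le_refl x) (by omega)
        omega
      · obtain ⟨a, harc, ha⟩ := exists_arc_left hC hkC hyC h2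
        have := hcond (a, y) harc (by omega) (le_refl y)
        omega
    refine ⟨(x, y), ?_, ?_⟩
    · simp only [Finset.mem_filter, Finset.mem_product, Finset.mem_Icc]
      exact ⟨⟨⟨by omega, by omega⟩, by omega, by omega⟩, hxy, B, hB, C, hC, hBC, hxB, hyC, hno⟩
    · exact Prod.ext (by omega) (by omega)
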